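/- Let u = (u₁,…,u₉) be a solution of the SEIR-like system on [0,S) with 0 < S ≤ T. Then u₁(t) > 0 for every t ∈ [0,S). -/
import Mathlib


open Set Filter MeasureTheory

/-- Right-hand side of the SEIR-like system. Components are indexed `0,…,8`,
corresponding to `x₁,…,x₉` (S, V, E, I_A, I_M, I_S, I_C, R, D). -/
noncomputable def seirRHS (a b c sigma p : ℝ) (beta nu gA gM gS gC aS aC dD : ℝ → ℝ)
    (t : ℝ) (x : Fin 9 → ℝ) : Fin 9 → ℝ :=
  ![-(x 0) * beta t * (c * x 3 + x 4 + a * x 5 + b * x 6) - nu t * x 0,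
    nu t * x 0,
    x 0 * beta t * (c * x 3 + x 4 + a * x 5 + b * x 6) - sigma * x 2,
    (1 - p) * sigma * x 2 - gA t * x 3,
    p * sigma * x 2 - (gM t + aS t) * x 4,
    aS t * x 4 - (gS t + aC t) * x 5,
    aC t * x 5 - (gC t + dD t) * x 6,
    gA t * x 3 + gM t * x 4 + gS t * x 5 + gC t * x 6,
    dD t * x 6]

/-- `u` is a (C¹) solution of the SEIR-like system on the set `J` with initial value `x₀`. -/
noncomputable def IsSEIRSolOn (a b c sigma p : ℝ) (beta nu gA gM gS gC aS aC dD : ℝ → ℝ)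
    (x₀ : Fin 9 → ℝ) (u : ℝ → Fin 9 → ℝ) (J : Set ℝ) : Prop :=
  u 0 = x₀ ∧
  ∀ i : Fin 9, ∀ t ∈ J,
    HasDerivWithinAt (fun s => u s i)
      (seirRHS a b c sigma p beta nu gA gM gS gC aS aC dD t (u t) i) J t

/-- any solution of the SEIR-like system on `[0,S)` has `u₁ > 0` there. -/
theorem seir_u1_pos
    (T a b c sigma p : ℝ) (hT : 0 < T) (ha : 0 < a) (hb : 0 < b) (hc : 0 < c)
    (hsigma : 0 < sigma) (hp0 : 0 < p) (hp1 : p < 1)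
    (beta nu gA gM gS gC aS aC dD : ℝ → ℝ)
    (hcont : ∀ f ∈ [beta, nu, gA, gM, gS, gC, aS, aC, dD], ContinuousOn f (Icc 0 T))
    (hpos : ∀ f ∈ [beta, nu, gA, gM, gS, gC, aS, aC, dD], ∀ t ∈ Icc (0:ℝ) T, 0 < f t)
    (x₀ : Fin 9 → ℝ) (hx₀ : ∀ i, 0 ≤ x₀ i) (hx₀1 : 0 < x₀ 0) (hx₀3 : 0 < x₀ 2)
    (S : ℝ) (hS : 0 < S) (hST : S ≤ T)
    (u : ℝ → Fin 9 → ℝ)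
    (hu : IsSEIRSolOn a b c sigma p beta nu gA gM gS gC aS aC dD x₀ u (Ico 0 S))
 :
    ∀ t ∈ Ico (0:ℝ) S, 0 < u t 0 := by
  obtain ⟨hu0, hud⟩ := hu
  intro t₀ ht₀
  by_contra hle
  push_neg at hle
  -- continuity of the components on `Ico 0 S`
  have hucont : ∀ i : Fin 9, ContinuousOn (fun s => u s i) (Ico 0 S) :=
    fun i t ht => (hud i t ht).continuousWithinAt
  have hsub : Icc (0:ℝ) t₀ ⊆ Ico 0 S := fun t ht => ⟨ht.1, lt_of_le_of_lt ht.2 ht₀.2⟩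
  -- the set of times in `[0, t₀]` where `u₁ ≤ 0`
  set E : Set ℝ := Icc 0 t₀ ∩ (fun t => u t 0) ⁻¹' Iic 0 with hE
  have hEne : E.Nonempty := ⟨t₀, ⟨⟨ht₀.1, le_rfl⟩, hle⟩⟩
  have hEclosed : IsClosed E :=
    ContinuousOn.preimage_isClosed_of_isClosed ((hucont 0).mono hsub) isClosed_Icc isClosed_Iic
  have hEbdd : BddBelow E := ⟨0, fun t ht => ht.1.1⟩
  set t₁ : ℝ := sInf E with ht₁def
  have ht₁E : t₁ ∈ E := hEclosed.csInf_mem hEne hEbdd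
  have ht₁mem : t₁ ∈ Icc 0 t₀ := ht₁E.1
  have ht₁le : u t₁ 0 ≤ 0 := ht₁E.2
  have hu00 : u 0 0 = x₀ 0 := by rw [hu0]
  have ht₁pos : 0 < t₁ := by
    rcases lt_or_eq_of_le ht₁mem.1 with h | h
    · exact h
    · exfalso; rw [← h, hu00] at ht₁le; linarith
  have hsub1 : Icc (0:ℝ) t₁ ⊆ Ico 0 S :=
    fun t ht => hsub ⟨ht.1, le_trans ht.2 ht₁mem.2⟩
  -- positivity before `t₁`
  have hbefore : ∀ t ∈ Ico (0:ℝ) t₁, 0 < u t 0 := by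
    intro t ht
    by_contra h
    push_neg at h
    have : t ∈ E := ⟨⟨ht.1, le_trans ht.2.le ht₁mem.2⟩, h⟩
    exact absurd (csInf_le hEbdd this) (not_le.2 ht.2)
  -- `u t₁ 0 = 0`
  have ht₁eq : u t₁ 0 = 0 := by
    refine le_antisymm ht₁le ?_
    have hcw : ContinuousWithinAt (fun s => u s 0) (Ico 0 t₁) t₁ := by
      have := ((hucont 0).mono hsub1) t₁ ⟨ht₁pos.le, le_rfl⟩
      exact this.mono Ico_subset_Icc_self
    have hclo : t₁ ∈ closure (Ico (0:ℝ) t₁) := by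
      rw [closure_Ico ht₁pos.ne]; exact ⟨ht₁pos.le, le_rfl⟩
    haveI hne : (nhdsWithin t₁ (Ico (0:ℝ) t₁)).NeBot := mem_closure_iff_nhdsWithin_neBot.1 hclo
    refine ge_of_tendsto hcw ?_
    filter_upwards [self_mem_nhdsWithin] with t ht using (hbefore t ht).le
  -- the coefficient function
  set g : ℝ → ℝ := fun t =>
    beta t * (c * u t 3 + u t 4 + a * u t 5 + b * u t 6) + nu t with hgdef
  have hsubT : Icc (0:ℝ) t₁ ⊆ Icc 0 T :=
    fun t ht => ⟨ht.1, le_trans ht.2 (le_trans ht₁mem.2 (le_trans ht₀.2.le hST))⟩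
  have hgcont : ContinuousOn g (Icc 0 t₁) := by
    have hb : ContinuousOn beta (Icc 0 t₁) :=
      (hcont beta (by simp)).mono hsubT
    have hn : ContinuousOn nu (Icc 0 t₁) :=
      (hcont nu (by simp)).mono hsubT
    have h3 := (hucont 3).mono hsub1
    have h4 := (hucont 4).mono hsub1
    have h5 := (hucont 5).mono hsub1
    have h6 := (hucont 6).mono hsub1
    exact (hb.mul ((((continuousOn_const.mul h3).add h4).add
      (continuousOn_const.mul h5)).add (continuousOn_const.mul h6))).add hn
  obtain ⟨K, hK⟩ := isCompact_Icc.exists_bound_of_continuousOn hgcont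
  -- the derivative of `u₁` is `-(g t) * u t 0`
  have hderiv : ∀ t ∈ Ico 0 S,
      HasDerivWithinAt (fun s => u s 0) (-(g t * u t 0)) (Ico 0 S) t := by
    intro t ht
    have := hud 0 t ht
    have heq : seirRHS a b c sigma p beta nu gA gM gS gC aS aC dD t (u t) 0
        = -(g t * u t 0) := by
      simp only [seirRHS, Matrix.cons_val_zero, hgdef]
      ring
    rwa [heq] at this
  -- reverse time
  set f : ℝ → ℝ := fun s => u (t₁ - s) 0 with hfdef
  have hfc : ContinuousOn f (Icc 0 t₁) := by
    apply ((hucont 0).mono hsub1).comp (by fun_prop)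
    intro s hs
    exact ⟨by simp; linarith [hs.2], by simp; linarith [hs.1]⟩
  have hf' : ∀ s ∈ Ico (0:ℝ) t₁,
      HasDerivWithinAt f (g (t₁ - s) * u (t₁ - s) 0) (Ici s) s := by
    intro s hs
    have hmem : t₁ - s ∈ Ico 0 S := hsub1 ⟨by linarith [hs.2], by linarith [hs.1]⟩
    have h1 := hderiv (t₁ - s) hmem
    have h2 : HasDerivWithinAt (fun s' : ℝ => t₁ - s') (-1) (Icc s t₁) s := by
      simpa using ((hasDerivAt_id s).const_sub t₁).hasDerivWithinAt
    have hmaps : MapsTo (fun s' : ℝ => t₁ - s') (Icc s t₁) (Ico 0 S) := by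
      intro r hr
      have : t₁ - r ∈ Icc 0 t₁ := ⟨by linarith [hr.2], by linarith [hr.1, hs.1]⟩
      exact hsub1 this
    have h3 := HasDerivWithinAt.comp s h1 h2 hmaps
    have h4 : HasDerivWithinAt f (g (t₁ - s) * u (t₁ - s) 0) (Icc s t₁) s := by
      have : -(g (t₁ - s) * u (t₁ - s) 0) * (-1) = g (t₁ - s) * u (t₁ - s) 0 := by ring
      rw [← this]
      exact h3
    exact h4.mono_of_mem_nhdsWithin (Icc_mem_nhdsGE_of_mem ⟨le_rfl, hs.2⟩)
  have hbound : ∀ s ∈ Ico (0:ℝ) t₁,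
      ‖g (t₁ - s) * u (t₁ - s) 0‖ ≤ K * ‖f s‖ + 0 := by
    intro s hs
    have hmem : t₁ - s ∈ Icc 0 t₁ := ⟨by linarith [hs.2], by linarith [hs.1]⟩
    rw [norm_mul, add_zero]
    have h1 : ‖g (t₁ - s)‖ ≤ K := hK _ hmem
    have h2 : (0:ℝ) ≤ ‖u (t₁ - s) 0‖ := norm_nonneg _
    calc ‖g (t₁ - s)‖ * ‖u (t₁ - s) 0‖ ≤ K * ‖u (t₁ - s) 0‖ := by nlinarith
      _ = K * ‖f s‖ := rfl
  have hf0 : ‖f 0‖ ≤ 0 := by simp [hfdef, ht₁eq]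
  have := norm_le_gronwallBound_of_norm_deriv_right_le hfc hf' hf0 hbound t₁
    ⟨ht₁pos.le, le_rfl⟩
  rw [gronwallBound_ε0_δ0] at this
  have hft₁ : f t₁ = x₀ 0 := by simp [hfdef, hu00]
  rw [hft₁] at this
  simp at this
  linarith
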